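/- Let A and B be finite sets of subsets of {1,...,n} such that for every A ∈ A and B ∈ B, |A ∩ B| is even and |B| is even. Then |A| · |B| ≤ 2^n. -/

import Mathlib

open Finset Module

theorem even_cross_bound (n : ℕ) (A B : Finset (Finset (Fin n)))
    (hinter : ∀ a ∈ A, ∀ b ∈ B, Even (a ∩ b).card)
    (heven : ∀ b ∈ B, Even b.card) :
    A.card * B.card ≤ 2 ^ n := by
  classical
  -- characteristic vector map
  set φ : Finset (Fin n) → (Fin n → ZMod 2) := fun s i => if i ∈ s then 1 else 0 with hφ
  have hφinj : Function.Injective φ := by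
    intro s t h
    ext i
    have := congrFun h i
    simp only [hφ] at this
    by_cases hs : i ∈ s <;> by_cases ht : i ∈ t <;> simp_all
  -- the standard bilinear form
  set F : LinearMap.BilinForm (ZMod 2) (Fin n → ZMod 2) :=
    Matrix.toBilin' (1 : Matrix (Fin n) (Fin n) (ZMod 2)) with hF
  have hFapply : ∀ x y, F x y = ∑ i, x i * y i := by
    intro x y
    simp [hF, Matrix.toBilin'_apply', dotProduct, Matrix.one_mulVec]
  have hFnd : F.Nondegenerate := by
    rw [hF, Matrix.nondegenerate_toBilin'_iff]
    rw [Matrix.nondegenerate_iff_det_ne_zero]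
    simp
  have hFrefl : F.IsRefl := by
    intro x y h
    rw [hFapply] at h ⊢
    simpa [mul_comm] using h
  -- inner product of characteristic vectors
  have hdot : ∀ s t : Finset (Fin n), F (φ s) (φ t) = ((s ∩ t).card : ZMod 2) := by
    intro s t
    rw [hFapply]
    rw [Finset.card_eq_sum_ones (s ∩ t), Nat.cast_sum]
    rw [← Finset.sum_subset (Finset.subset_univ (s ∩ t))]
    · apply Finset.sum_congr rfl
      intro i hi
      simp only [Finset.mem_inter] at hi
      simp [hφ, hi.1, hi.2]
    · intro i _ hi
      simp only [Finset.mem_inter, not_and] at hi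
      by_cases h : i ∈ s
      · simp [hφ, h, hi h]
      · simp [hφ, h]
  set U : Submodule (ZMod 2) (Fin n → ZMod 2) := Submodule.span (ZMod 2) (φ '' A) with hU
  set W : Submodule (ZMod 2) (Fin n → ZMod 2) := Submodule.span (ZMod 2) (φ '' B) with hW
  have hWle : W ≤ F.orthogonal U := by
    rw [hW, Submodule.span_le]
    rintro _ ⟨b, hb, rfl⟩
    rw [SetLike.mem_coe, LinearMap.BilinForm.mem_orthogonal_iff]
    intro u hu
    induction hu using Submodule.span_induction with
    | mem x hx =>
      obtain ⟨a, ha, rfl⟩ := hx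
      have := hinter a ha b hb
      rw [hdot]
      obtain ⟨k, hk⟩ := this
      simp [hk, two_mul]
      exact CharTwo.add_self_eq_zero _
    | zero => simp [LinearMap.BilinForm.IsOrtho]
    | add x y _ _ hx hy =>
      simp [hx, hy]
    | smul c x _ hx =>
      simp [hx]
  -- dimension count
  have hdim : finrank (ZMod 2) W ≤ n - finrank (ZMod 2) U := by
    calc finrank (ZMod 2) W ≤ finrank (ZMod 2) (F.orthogonal U) :=
          Submodule.finrank_mono hWle
      _ = n - finrank (ZMod 2) U := by
          rw [LinearMap.BilinForm.finrank_orthogonal hFnd]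
          congr 1
          simp [finrank_fintype_fun_eq_card]
  have hUn : finrank (ZMod 2) U ≤ n := by
    have := Submodule.finrank_le U
    simpa [finrank_fintype_fun_eq_card] using this
  -- card bounds
  have cardbound : ∀ (S : Finset (Finset (Fin n))) (V : Submodule (ZMod 2) (Fin n → ZMod 2)),
      V = Submodule.span (ZMod 2) (φ '' S) → S.card ≤ 2 ^ finrank (ZMod 2) V := by
    intro S V hV
    have hmem : ∀ s ∈ S, φ s ∈ V := by
      intro s hs
      rw [hV]
      exact Submodule.subset_span ⟨s, hs, rfl⟩
    have : S.card ≤ (V : Set (Fin n → ZMod 2)).toFinset.card := by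
      apply Finset.card_le_card_of_injOn φ
      · intro s hs
        simp [hmem s hs]
      · exact fun a _ b _ h => hφinj h
    calc S.card ≤ (V : Set (Fin n → ZMod 2)).toFinset.card := this
      _ = Fintype.card V := by rw [Set.toFinset_card]; exact Fintype.card_congr (Equiv.refl _)
      _ = 2 ^ finrank (ZMod 2) V := by
          rw [card_eq_pow_finrank (K := ZMod 2)]
          norm_num
  have hA := cardbound A U hU
  have hB := cardbound B W hW
  calc A.card * B.card ≤ 2 ^ finrank (ZMod 2) U * 2 ^ finrank (ZMod 2) W :=
        Nat.mul_le_mul hA hB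
    _ = 2 ^ (finrank (ZMod 2) U + finrank (ZMod 2) W) := (pow_add 2 _ _).symm
    _ ≤ 2 ^ n := by
        apply Nat.pow_le_pow_right (by norm_num)
        omega
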